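/- Let f, g : ℝ → ℝ be measurable functions satisfying |f(y)| ≤ C₁/(1+y²) and |g(y)| ≤ C₁/(1+y²) for all y. Then there exists a constant C₀ (depending only on C₁) such that for all real x₁, x₂ with |x₁ - x₂| ≥ 1, the L² norm of y ↦ f(y - x₁)·g(y - x₂) is at most C₀ / (x₁ - x₂)². -/

import Mathlib

open MeasureTheory

lemma hnorm_le : eLpNorm (fun t : ℝ => (1+t^2)⁻¹) 2 volume ≤ ENNReal.ofReal 2 := by
  rw [eLpNorm_eq_lintegral_rpow_enorm_toReal (by norm_num) (by norm_num)]
  have htoReal : (2:ENNReal).toReal = 2 := by norm_num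
  rw [htoReal]
  have step : (∫⁻ t : ℝ, (‖(1+t^2)⁻¹‖₊ : ENNReal) ^ (2:ℝ)) ≤ ENNReal.ofReal 4 := by
    have hpt : ∀ t : ℝ, (‖(1+t^2)⁻¹‖₊ : ENNReal) ^ (2:ℝ) ≤ ENNReal.ofReal ((1+t^2)⁻¹) := by
      intro t
      have h0 : (0:ℝ) ≤ (1+t^2)⁻¹ := by positivity
      have hle1 : ((1+t^2)⁻¹ : ℝ) ≤ 1 := by
        rw [inv_le_one_iff₀]
        right
        nlinarith [sq_nonneg t]
      have hcoe : (‖(1+t^2)⁻¹‖₊ : ENNReal) = ENNReal.ofReal ((1+t^2)⁻¹) := by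
        rw [← Real.enorm_eq_ofReal h0, enorm_eq_nnnorm]
      have h1 : (‖(1+t^2)⁻¹‖₊ : ENNReal) ≤ 1 := by
        rw [hcoe]
        exact (ENNReal.ofReal_le_one).2 hle1
      calc (‖(1+t^2)⁻¹‖₊ : ENNReal) ^ (2:ℝ)
          ≤ (‖(1+t^2)⁻¹‖₊ : ENNReal) ^ (1:ℝ) :=
            ENNReal.rpow_le_rpow_of_exponent_ge h1 (by norm_num)
        _ = (‖(1+t^2)⁻¹‖₊ : ENNReal) := ENNReal.rpow_one _
        _ = ENNReal.ofReal ((1+t^2)⁻¹) := hcoe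
    calc (∫⁻ t : ℝ, (‖(1+t^2)⁻¹‖₊ : ENNReal) ^ (2:ℝ))
        ≤ ∫⁻ t : ℝ, ENNReal.ofReal ((1+t^2)⁻¹) := lintegral_mono hpt
      _ = ENNReal.ofReal (∫ t : ℝ, (1+t^2)⁻¹) :=
          (ofReal_integral_eq_lintegral_ofReal integrable_inv_one_add_sq
            (Filter.Eventually.of_forall fun t => by positivity)).symm
      _ = ENNReal.ofReal Real.pi := by rw [integral_univ_inv_one_add_sq]
      _ ≤ ENNReal.ofReal 4 := ENNReal.ofReal_le_ofReal Real.pi_le_four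
  calc (∫⁻ t : ℝ, (‖(1+t^2)⁻¹‖₊ : ENNReal) ^ (2:ℝ)) ^ (1/2 : ℝ)
      ≤ (ENNReal.ofReal 4) ^ (1/2 : ℝ) := ENNReal.rpow_le_rpow step (by norm_num)
    _ = ENNReal.ofReal 2 := by
        rw [ENNReal.ofReal_rpow_of_nonneg (by norm_num) (by norm_num),
          ← Real.sqrt_eq_rpow, show (4:ℝ) = 2^2 by norm_num, Real.sqrt_sq (by norm_num)]

theorem stmt1 (C₁ : ℝ) (hC₁ : 0 < C₁) :
    ∃ C₀ > 0, ∀ f g : ℝ → ℝ, Measurable f → Measurable g →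
      (∀ y : ℝ, |f y| ≤ C₁ / (1 + y ^ 2)) → (∀ y : ℝ, |g y| ≤ C₁ / (1 + y ^ 2)) →
      ∀ x₁ x₂ : ℝ, 1 ≤ |x₁ - x₂| →
        eLpNorm (fun y => f (y - x₁) * g (y - x₂)) 2 volume
          ≤ ENNReal.ofReal (C₀ / (x₁ - x₂) ^ 2) := by
  refine ⟨8 * C₁ ^ 2, by positivity, ?_⟩
  intro f g hf hg hfb hgb x₁ x₂ hdist
  set d : ℝ := x₁ - x₂ with hd
  have hd2 : 1 ≤ d ^ 2 := by nlinarith [sq_abs d, abs_nonneg d]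
  have hd2pos : 0 < d ^ 2 := by linarith
  set h : ℝ → ℝ := fun t => (1+t^2)⁻¹ with hh
  set c : ℝ := 2 * C₁ ^ 2 / (1 + d ^ 2) with hc
  have hcpos : 0 < c := by positivity
  have hcont : Continuous h := by
    apply Continuous.inv₀ (by continuity)
    intro t; positivity
  have key : ∀ y : ℝ, |f (y - x₁) * g (y - x₂)| ≤ c * (h (y - x₁) + h (y - x₂)) := by
    intro y
    set a : ℝ := y - x₁
    set b : ℝ := y - x₂
    have hpa : (0:ℝ) < 1 + a ^ 2 := by positivity
    have hpb : (0:ℝ) < 1 + b ^ 2 := by positivity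
    have hpd : (0:ℝ) < 1 + d ^ 2 := by positivity
    have h1 := hfb a
    have h2 := hgb b
    have hsum : 1 + d ^ 2 ≤ 2 * ((1 + a ^ 2) + (1 + b ^ 2)) := by
      have : d = b - a := by simp [hd, a, b]
      rw [this]; nlinarith [sq_nonneg (a + b)]
    calc |f a * g b| = |f a| * |g b| := abs_mul _ _
      _ ≤ (C₁ / (1 + a ^ 2)) * (C₁ / (1 + b ^ 2)) :=
          mul_le_mul h1 h2 (abs_nonneg _) (by positivity)
      _ ≤ c * (h a + h b) := by
          rw [hc, hh]
          rw [div_mul_div_comm, div_le_iff₀ (by positivity)]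
          have expand : 2 * C₁ ^ 2 / (1 + d ^ 2) * ((1 + a ^ 2)⁻¹ + (1 + b ^ 2)⁻¹) *
              ((1 + a ^ 2) * (1 + b ^ 2)) = 2 * C₁ ^ 2 * ((1 + b ^ 2) + (1 + a ^ 2)) / (1 + d ^ 2) := by
            field_simp
          rw [expand, le_div_iff₀ hpd]
          nlinarith [sq_nonneg C₁]
  have norm_key : ∀ y : ℝ, ‖f (y - x₁) * g (y - x₂)‖ ≤
      ‖(c • (fun y => h (y - x₁) + h (y - x₂))) y‖ := by
    intro y
    rw [Real.norm_eq_abs, Real.norm_eq_abs]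
    refine (key y).trans (le_abs_self _)
  have hmeas1 : AEStronglyMeasurable (fun y : ℝ => h (y - x₁)) volume :=
    (hcont.comp (continuous_id.sub continuous_const)).aestronglyMeasurable
  have hmeas2 : AEStronglyMeasurable (fun y : ℝ => h (y - x₂)) volume :=
    (hcont.comp (continuous_id.sub continuous_const)).aestronglyMeasurable
  have htrans : ∀ x : ℝ, eLpNorm (fun y : ℝ => h (y - x)) 2 volume = eLpNorm h 2 volume := by
    intro x
    exact eLpNorm_comp_measurePreserving hcont.aestronglyMeasurable
      (measurePreserving_sub_right volume x)
  calc eLpNorm (fun y => f (y - x₁) * g (y - x₂)) 2 volume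
      ≤ eLpNorm (c • (fun y => h (y - x₁) + h (y - x₂))) 2 volume := eLpNorm_mono norm_key
    _ = ‖c‖₊ * eLpNorm (fun y => h (y - x₁) + h (y - x₂)) 2 volume :=
        eLpNorm_const_smul c _ 2 volume
    _ ≤ ‖c‖₊ * (eLpNorm (fun y : ℝ => h (y - x₁)) 2 volume +
          eLpNorm (fun y : ℝ => h (y - x₂)) 2 volume) := by
        gcongr
        exact eLpNorm_add_le hmeas1 hmeas2 (by norm_num)
    _ ≤ ‖c‖₊ * (ENNReal.ofReal 2 + ENNReal.ofReal 2) := by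
        rw [htrans x₁, htrans x₂]
        gcongr <;> exact hnorm_le
    _ ≤ ENNReal.ofReal (8 * C₁ ^ 2 / d ^ 2) := by
        have hcnn : (‖c‖₊ : ENNReal) = ENNReal.ofReal c := by
          rw [← Real.enorm_eq_ofReal hcpos.le, enorm_eq_nnnorm]
        rw [hcnn, ← ENNReal.ofReal_add (by norm_num) (by norm_num),
          ← ENNReal.ofReal_mul hcpos.le]
        apply ENNReal.ofReal_le_ofReal
        rw [hc]
        rw [div_mul_eq_mul_div, div_le_div_iff₀ (by positivity) hd2pos]
        nlinarith [sq_nonneg C₁, sq_nonneg (C₁ * d)]
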